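/- arXiv:2408.04937 — 5 statements merged into one kernel-verified Lean document; each statement's English description precedes it below -/
import Mathlib

section
/- Let q < p < 0 be real numbers, and let S be the set of points z in the upper half-plane ℍ (with its standard hyperbolic metric) lying on the Euclidean circle centered at (p+q)/2 of radius (p-q)/2, i.e. S = { z ∈ ℍ : |z - (p+q)/2| = (p-q)/2 }. Then the point √(pq)·i ∈ ℍ minimizes, among all points on the positive imaginary axis, the hyperbolic distance to S: for every real y > 0, the infimum of hyperbolic distances from √(pq)·i to points of S is at most the infimum of hyperbolic distances from y·i to points of S. -/
open UpperHalfPlane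

private lemma stmt4.keyineq (c r y u v : ℝ) (hc : c < 0) (hr : 0 < r) (hy : 0 < y)
    (hcirc : (u - c)^2 + v^2 = r^2) :
    (-c) * (2*y*v) ≤ (2*y*v + (u^2 + (y - v)^2)) * r := by
  set s := Real.sqrt (r^2 + y^2) with hsdef
  have hs : s^2 = r^2 + y^2 := Real.sq_sqrt (by positivity)
  have hs0 : 0 < s := Real.sqrt_pos.2 (by positivity)
  have hA2 : (r*(u-c) + y*v)^2 ≤ (r*s)^2 := by nlinarith [sq_nonneg (r*v - y*(u-c))]
  have hA : r*(u-c) + y*v ≤ r*s := by nlinarith [hA2, mul_pos hr hs0]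
  nlinarith [mul_nonneg hr.le (sq_nonneg (s + c)),
    mul_nonneg (neg_nonneg.2 hc.le) (sub_nonneg.2 hA), hs]

private lemma stmt4.circeq (P c r s : ℝ) (hcr : c^2 - r^2 = P) (hc : c ≠ 0) (hs : s^2 = P) :
    (P/c - c)^2 + (r * s / (-c))^2 = r^2 := by
  field_simp
  linear_combination r^2 * hs + (c^2 - P) * hcr

private lemma stmt4.cosheq (P c r a u v : ℝ) (hc : c ≠ 0)
    (e1 : u * c = P) (e2 : v * (-c) = r * a) (ha : a^2 = P) (hcr : c^2 - r^2 = P) :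
    (2*a*v + (u^2 + (a - v)^2)) * r = (-c) * (2*a*v) := by
  have hc2 : (c:ℝ)^2 ≠ 0 := pow_ne_zero 2 hc
  apply mul_left_cancel₀ hc2
  linear_combination (r*(u*c + P)) * e1 + (r*(r*a - v*c)) * e2 + (-2*a*c^2) * e2
    + (-r*a^2) * hcr + (-r*P) * ha

private lemma stmt4.cosh_dist_coord (z w : UpperHalfPlane) (a u v : ℝ)
    (hz : (z : ℂ) = (a : ℝ) * Complex.I) (hw : (w : ℂ) = Complex.mk u v) :
    Real.cosh (dist z w) = 1 + (u^2 + (a - v)^2) / (2 * a * v) := by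
  have hzim : z.im = a := by rw [← UpperHalfPlane.coe_im, hz]; simp
  have hwim : w.im = v := by rw [← UpperHalfPlane.coe_im, hw]
  rw [UpperHalfPlane.cosh_dist, hzim, hwim, Complex.dist_eq, Complex.sq_norm, hz, hw]
  congr 1
  congr 1
  simp [Complex.normSq_apply, Complex.ext_iff]
  ring

/-- For `q < p < 0`, letting `S ⊆ ℍ` be the hyperbolic geodesic with endpoints `q` and `p`
(the set of points of `ℍ` on the Euclidean circle centered at `(p+q)/2` of radius `(p-q)/2`),
the point `√(pq)·i` minimizes, among points `y·i` (`y > 0`) of the positive imaginary axis,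
the infimum of hyperbolic distances to `S`. -/
theorem stmt4 (p q : ℝ) (hq : q < p) (hp : p < 0)
    (S : Set UpperHalfPlane)
    (hS : S = {z : UpperHalfPlane |
      ‖(z : ℂ) - ((((p + q) / 2 : ℝ)) : ℂ)‖ = (p - q) / 2}) :
    ∀ y : ℝ, 0 < y → ∀ z₀ zy : UpperHalfPlane,
      (z₀ : ℂ) = (Real.sqrt (p * q) : ℝ) * Complex.I →
      (zy : ℂ) = (y : ℝ) * Complex.I →
      sInf (dist z₀ '' S) ≤ sInf (dist zy '' S) := by
  intro y hy z₀ zy hz₀ hzy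
  obtain ⟨c, hcdef⟩ : ∃ x : ℝ, x = (p + q) / 2 := ⟨_, rfl⟩
  obtain ⟨r, hrdef⟩ : ∃ x : ℝ, x = (p - q) / 2 := ⟨_, rfl⟩
  rw [← hcdef, ← hrdef] at hS
  have hc : c < 0 := by rw [hcdef]; linarith
  have hr : 0 < r := by rw [hrdef]; linarith
  have hcr : c^2 - r^2 = p * q := by rw [hcdef, hrdef]; ring
  have hpq : 0 < p * q := mul_pos_of_neg_of_neg hp (lt_trans hq hp)
  set a : ℝ := Real.sqrt (p * q) with hadef
  have ha : a ^ 2 = p * q := Real.sq_sqrt hpq.le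
  have ha0 : 0 < a := Real.sqrt_pos.2 hpq
  -- the closest point w₀ on S to z₀
  obtain ⟨u₀, hu₀⟩ : ∃ x : ℝ, x = p * q / c := ⟨_, rfl⟩
  obtain ⟨v₀, hv₀⟩ : ∃ x : ℝ, x = r * a / (-c) := ⟨_, rfl⟩
  have hv₀pos : 0 < v₀ := by
    rw [hv₀]; exact div_pos (mul_pos hr ha0) (neg_pos.2 hc)
  have e1 : u₀ * c = p * q := by rw [hu₀]; exact div_mul_cancel₀ _ hc.ne
  have e2 : v₀ * (-c) = r * a := by
    rw [hv₀]; exact div_mul_cancel₀ _ (neg_ne_zero.2 hc.ne)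
  set w₀ : UpperHalfPlane := ⟨Complex.mk u₀ v₀, hv₀pos⟩ with hw₀def
  have hw₀coe : (w₀ : ℂ) = Complex.mk u₀ v₀ := rfl
  have hw₀circ : (u₀ - c)^2 + v₀^2 = r^2 := by
    rw [hu₀, hv₀]; exact stmt4.circeq (p*q) c r a hcr hc.ne ha
  have hw₀S : w₀ ∈ S := by
    rw [hS]
    show ‖(w₀ : ℂ) - ((c : ℝ) : ℂ)‖ = r
    have h1 : ‖(w₀ : ℂ) - ((c : ℝ) : ℂ)‖ ^ 2 = r ^ 2 := by
      rw [Complex.sq_norm, Complex.normSq_apply, hw₀coe]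
      simp only [Complex.sub_re, Complex.sub_im, Complex.ofReal_re, Complex.ofReal_im]
      linear_combination hw₀circ
    have h2 := congrArg Real.sqrt h1
    rwa [Real.sqrt_sq (norm_nonneg _), Real.sqrt_sq hr.le] at h2
  have h2av : (0:ℝ) < 2 * a * v₀ := by positivity
  have hcoshz₀ : Real.cosh (dist z₀ w₀) = (-c) / r := by
    rw [stmt4.cosh_dist_coord z₀ w₀ a u₀ v₀ hz₀ hw₀coe]
    have hrw : (1:ℝ) + (u₀^2 + (a - v₀)^2) / (2 * a * v₀)
        = (2*a*v₀ + (u₀^2 + (a - v₀)^2)) / (2*a*v₀) := by field_simp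
    rw [hrw, div_eq_div_iff h2av.ne' hr.ne']
    exact stmt4.cosheq (p*q) c r a u₀ v₀ hc.ne e1 e2 ha hcr
  -- pointwise bound
  have hpoint : ∀ w ∈ S, dist z₀ w₀ ≤ dist zy w := by
    intro w hw
    rw [hS] at hw
    have hwc : ‖(w : ℂ) - ((c : ℝ) : ℂ)‖ = r := hw
    obtain ⟨u, hu⟩ : ∃ x : ℝ, x = (w : ℂ).re := ⟨_, rfl⟩
    obtain ⟨v, hv⟩ : ∃ x : ℝ, x = (w : ℂ).im := ⟨_, rfl⟩
    have hvpos : 0 < v := by rw [hv]; exact w.2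
    have hwcoe : (w : ℂ) = Complex.mk u v := by
      apply Complex.ext
      · exact hu.symm
      · exact hv.symm
    have hcirc : (u - c)^2 + v^2 = r^2 := by
      have h1 : ‖(w : ℂ) - ((c : ℝ) : ℂ)‖ ^ 2 = r ^ 2 := by rw [hwc]
      rw [Complex.sq_norm, Complex.normSq_apply, hwcoe] at h1
      simp only [Complex.sub_re, Complex.sub_im, Complex.ofReal_re, Complex.ofReal_im] at h1
      linear_combination h1
    have hcoshy : Real.cosh (dist zy w) = 1 + (u^2 + (y - v)^2) / (2 * y * v) :=
      stmt4.cosh_dist_coord zy w y u v hzy hwcoe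
    have h2yv : (0:ℝ) < 2 * y * v := by positivity
    have hle : (-c) / r ≤ Real.cosh (dist zy w) := by
      rw [hcoshy]
      have hrw : (1:ℝ) + (u^2 + (y - v)^2) / (2 * y * v)
          = (2*y*v + (u^2 + (y - v)^2)) / (2*y*v) := by field_simp
      rw [hrw, div_le_div_iff₀ hr h2yv]
      exact stmt4.keyineq c r y u v hc hr hy hcirc
    have hcc : Real.cosh (dist z₀ w₀) ≤ Real.cosh (dist zy w) := by
      rw [hcoshz₀]; exact hle
    have h3 := Real.cosh_le_cosh.mp hcc
    rwa [abs_of_nonneg dist_nonneg, abs_of_nonneg dist_nonneg] at h3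
  -- assemble
  have hbdd : BddBelow (dist z₀ '' S) := ⟨0, by rintro _ ⟨w, hw, rfl⟩; exact dist_nonneg⟩
  have h1 : sInf (dist z₀ '' S) ≤ dist z₀ w₀ := csInf_le hbdd ⟨w₀, hw₀S, rfl⟩
  have h2 : dist z₀ w₀ ≤ sInf (dist zy '' S) := by
    apply le_csInf (Set.Nonempty.image (dist zy) ⟨w₀, hw₀S⟩)
    rintro _ ⟨w, hw, rfl⟩
    exact hpoint w hw
  linarith
end

section
/- Let l₀, l₁, l₂ > 0 be real numbers, set λₖ := exp(lₖ/2) for k = 0, 1, 2, and set f := (cosh(l₁/2) + cosh((l₂ + l₀)/2)) / (2·sinh(l₂/2)·sinh(l₀/2)). Then f > 1, the matrix A := (√(f-1), -√f; √f, -√(f-1)) belongs to SL(2,ℝ), and the trace of D(λ₀) · A · D(λ₂) · A⁻¹ equals -λ₁ - λ₁⁻¹. -/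
open Matrix

/-- `D h` is the diagonal matrix `((h,0),(0,h⁻¹))`. -/
noncomputable def D (h : ℝ) : Matrix (Fin 2) (Fin 2) ℝ := !![h, 0; 0, h⁻¹]

/-- For `l₀, l₁, l₂ > 0`, `λₖ = exp(lₖ/2)` and
`f = (cosh(l₁/2) + cosh((l₂+l₀)/2))/(2·sinh(l₂/2)·sinh(l₀/2))`, one has `f > 1`,
the matrix `A = (√(f-1), -√f; √f, -√(f-1))` lies in SL(2,ℝ), and
`trace(D(λ₀)·A·D(λ₂)·A⁻¹) = -λ₁ - λ₁⁻¹`. -/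
theorem stmt12 (l₀ l₁ l₂ : ℝ) (h₀ : 0 < l₀) (h₁ : 0 < l₁) (h₂ : 0 < l₂)
    (lam₀ lam₁ lam₂ : ℝ)
    (hlam₀ : lam₀ = Real.exp (l₀ / 2)) (hlam₁ : lam₁ = Real.exp (l₁ / 2))
    (hlam₂ : lam₂ = Real.exp (l₂ / 2))
    (f : ℝ)
    (hf : f = (Real.cosh (l₁ / 2) + Real.cosh ((l₂ + l₀) / 2))
        / (2 * Real.sinh (l₂ / 2) * Real.sinh (l₀ / 2)))
    (A : Matrix (Fin 2) (Fin 2) ℝ)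
    (hA : A = !![Real.sqrt (f - 1), -Real.sqrt f;
                 Real.sqrt f, -Real.sqrt (f - 1)]) :
    1 < f ∧ A.det = 1 ∧
    (D lam₀ * A * D lam₂ * A⁻¹).trace = -lam₁ - lam₁⁻¹ := by
  have hsx : 0 < Real.sinh (l₂ / 2) := Real.sinh_pos_iff.2 (by linarith)
  have hsy : 0 < Real.sinh (l₀ / 2) := Real.sinh_pos_iff.2 (by linarith)
  have hd : 0 < 2 * Real.sinh (l₂ / 2) * Real.sinh (l₀ / 2) := by positivity
  have hc1 : 0 < Real.cosh (l₁ / 2) := Real.cosh_pos _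
  have hc2 : 0 < Real.cosh ((l₂ - l₀) / 2) := Real.cosh_pos _
  have hco : Real.cosh ((l₂ + l₀) / 2)
      = Real.cosh (l₂ / 2 + l₀ / 2) := by ring_nf
  have hcm : Real.cosh ((l₂ - l₀) / 2)
      = Real.cosh (l₂ / 2 - l₀ / 2) := by ring_nf
  have hfgt : 1 < f := by
    rw [hf, lt_div_iff₀ hd]
    rw [hco]
    rw [Real.cosh_add]
    nlinarith [Real.cosh_sub (l₂ / 2) (l₀ / 2), hcm]
  refine ⟨hfgt, ?_, ?_⟩
  · have hs : Real.sqrt (f - 1) ^ 2 = f - 1 := Real.sq_sqrt (by linarith)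
    have ht : Real.sqrt f ^ 2 = f := Real.sq_sqrt (by linarith)
    rw [hA, Matrix.det_fin_two_of]
    nlinarith [hs, ht]
  · have hs : Real.sqrt (f - 1) ^ 2 = f - 1 := Real.sq_sqrt (by linarith)
    have ht : Real.sqrt f ^ 2 = f := Real.sq_sqrt (by linarith)
    set s := Real.sqrt (f - 1)
    set t := Real.sqrt f
    have hAB : A * !![-s, t; -t, s] = 1 := by
      rw [hA, Matrix.mul_fin_two, Matrix.one_fin_two,
        show s * -s + -t * -t = 1 by rw [show s * -s + -t * -t = t^2 - s^2 by ring, hs, ht]; ring,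
        show s * t + -t * s = 0 by ring,
        show t * -s + -s * -t = 0 by ring,
        show t * t + -s * s = 1 by rw [show t * t + -s * s = t^2 - s^2 by ring, hs, ht]; ring]
    have hAinv : A⁻¹ = !![-s, t; -t, s] := Matrix.inv_eq_right_inv hAB
    rw [hAinv, hA]
    have hl0 : 0 < lam₀ := hlam₀ ▸ Real.exp_pos _
    have hl2 : 0 < lam₂ := hlam₂ ▸ Real.exp_pos _
    have htr : (D lam₀ * !![s, -t; t, -s] * D lam₂ * !![-s, t; -t, s]).trace
        = lam₀ * (-(s * s) * lam₂ + t * t * lam₂⁻¹)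
          + lam₀⁻¹ * (t * t * lam₂ - s * s * lam₂⁻¹) := by
      simp only [D, Matrix.mul_fin_two, Matrix.trace_fin_two_of]
      ring
    rw [htr]
    have hss : s * s = f - 1 := by rw [← hs]; ring
    have htt : t * t = f := by rw [← ht]; ring
    rw [hss, htt]
    -- exponential identities
    have e0 : lam₀⁻¹ = Real.exp (-(l₀ / 2)) := by rw [hlam₀, Real.exp_neg]
    have e1 : lam₁⁻¹ = Real.exp (-(l₁ / 2)) := by rw [hlam₁, Real.exp_neg]
    have e2 : lam₂⁻¹ = Real.exp (-(l₂ / 2)) := by rw [hlam₂, Real.exp_neg]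
    have h1 : lam₀ * lam₂⁻¹ + lam₀⁻¹ * lam₂ - lam₀ * lam₂ - lam₀⁻¹ * lam₂⁻¹
        = -2 * (2 * Real.sinh (l₂ / 2) * Real.sinh (l₀ / 2)) := by
      rw [hlam₀, hlam₂, Real.sinh_eq, Real.sinh_eq]
      simp only [Real.exp_neg]
      ring
    have h2 : f * (2 * Real.sinh (l₂ / 2) * Real.sinh (l₀ / 2))
        = (lam₁ + lam₁⁻¹) / 2 + (lam₂ * lam₀ + lam₂⁻¹ * lam₀⁻¹) / 2 := by
      rw [hf, div_mul_cancel₀ _ (ne_of_gt hd)]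
      rw [Real.cosh_eq, hco, Real.cosh_eq, hlam₁, hlam₀, hlam₂]
      simp only [Real.exp_neg, Real.exp_add]
      ring
    linear_combination f * h1 - 2 * h2
end

section
/- Let λ > 1 be a real number, let ε₁, ε₂ ∈ {1, -1}, and let A, B ∈ SL(2,ℝ) satisfy B · D(√λ) = ε₁ · D(1/√λ) · A and A · D(√λ) = ε₂ · D(1/√λ) · B. Then ε₁ = ε₂, and there exists a nonzero real number T such that A = (0, -T⁻¹; T, 0) and B = ε₁ · A. -/
open Matrix

/-- If `λ > 1`, `ε₁, ε₂ ∈ {1,-1}`, and `A, B ∈ SL(2,ℝ)` satisfy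
`B·D(√λ) = ε₁·D(1/√λ)·A` and `A·D(√λ) = ε₂·D(1/√λ)·B`, then `ε₁ = ε₂` and
`A = (0, -T⁻¹; T, 0)` for some `T ≠ 0`, with `B = ε₁·A`. -/
theorem stmt13 (l : ℝ) (hl : 1 < l) (ε₁ ε₂ : ℝ)
    (hε₁ : ε₁ = 1 ∨ ε₁ = -1) (hε₂ : ε₂ = 1 ∨ ε₂ = -1)
    (A B : Matrix (Fin 2) (Fin 2) ℝ) (hA : A.det = 1) (hB : B.det = 1)
    (h₁ : B * D (Real.sqrt l) = ε₁ • (D (1 / Real.sqrt l) * A))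
    (h₂ : A * D (Real.sqrt l) = ε₂ • (D (1 / Real.sqrt l) * B)) :
    ε₁ = ε₂ ∧ ∃ T : ℝ, T ≠ 0 ∧ A = !![0, -T⁻¹; T, 0] ∧ B = ε₁ • A := by
  set s := Real.sqrt l with hsdef
  have hs1 : 1 < s := by
    have : Real.sqrt 1 < Real.sqrt l := Real.sqrt_lt_sqrt (by norm_num) hl
    simpa using this
  have hs0 : s ≠ 0 := by positivity
  have k00 := congrFun (congrFun h₁ 0) 0
  have k01 := congrFun (congrFun h₁ 0) 1
  have k10 := congrFun (congrFun h₁ 1) 0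
  have k11 := congrFun (congrFun h₁ 1) 1
  have m00 := congrFun (congrFun h₂ 0) 0
  have m01 := congrFun (congrFun h₂ 0) 1
  have m10 := congrFun (congrFun h₂ 1) 0
  have m11 := congrFun (congrFun h₂ 1) 1
  simp only [D, Matrix.mul_apply, Fin.sum_univ_two, Matrix.smul_apply, smul_eq_mul,
    Matrix.cons_val', Matrix.cons_val_zero, Matrix.cons_val_one, Matrix.head_cons,
    Matrix.empty_val', Matrix.cons_val_fin_one, Matrix.head_fin_const, one_div,
    Matrix.of_apply, mul_zero, zero_mul, add_zero, zero_add, inv_inv] at k00 k01 k10 k11 m00 m01 m11 m10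
  rw [Matrix.det_fin_two] at hA hB
  have hss : 1 < s * s := by nlinarith
  have hs4 : 1 < s * s * (s * s) := by nlinarith
  -- cleaned entrywise equations
  have K00 : B 0 0 * (s * s) = ε₁ * A 0 0 := by
    field_simp at k00; linear_combination k00
  have M00 : A 0 0 * (s * s) = ε₂ * B 0 0 := by
    field_simp at m00; linear_combination m00
  have K11 : B 1 1 = ε₁ * (s * s) * A 1 1 := by
    field_simp at k11; linear_combination k11
  have M11 : A 1 1 = ε₂ * (s * s) * B 1 1 := by
    field_simp at m11; linear_combination m11
  have K01 : B 0 1 = ε₁ * A 0 1 := by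
    field_simp at k01; linear_combination k01
  have M01 : A 0 1 = ε₂ * B 0 1 := by
    field_simp at m01; linear_combination m01
  have K10 : B 1 0 = ε₁ * A 1 0 := mul_right_cancel₀ hs0 (by linear_combination k10)
  have M10 : A 1 0 = ε₂ * B 1 0 := mul_right_cancel₀ hs0 (by linear_combination m10)
  have hεp : ε₁ * ε₂ = 1 ∨ ε₁ * ε₂ = -1 := by
    rcases hε₁ with rfl | rfl <;> rcases hε₂ with rfl | rfl <;> norm_num
  -- diagonal entries vanish
  have ha00 : A 0 0 = 0 := by
    have h4 : A 0 0 * (s * s * (s * s) - ε₁ * ε₂) = 0 := by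
      linear_combination (s * s) * M00 + ε₂ * K00
    rcases mul_eq_zero.mp h4 with h | h
    · exact h
    · exfalso; rcases hεp with he | he <;> rw [he] at h <;> linarith
  have ha11 : A 1 1 = 0 := by
    have h4 : A 1 1 * (ε₁ * ε₂ * (s * s * (s * s)) - 1) = 0 := by
      linear_combination -ε₂ * (s * s) * K11 - M11
    rcases mul_eq_zero.mp h4 with h | h
    · exact h
    · exfalso; rcases hεp with he | he <;> rw [he] at h <;> nlinarith
  have hb00 : B 0 0 = 0 := by
    have h5 := K00; rw [ha00, mul_zero] at h5
    exact (mul_eq_zero.mp h5).resolve_right (mul_ne_zero hs0 hs0)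
  have hb11 : B 1 1 = 0 := by rw [K11, ha11, mul_zero]
  have hdet : A 0 1 * A 1 0 = -1 := by
    rw [ha00, ha11] at hA; linarith
  have ha10 : A 1 0 ≠ 0 := by
    intro h; rw [h] at hdet; norm_num at hdet
  have ha01 : A 0 1 ≠ 0 := by
    intro h; rw [h] at hdet; norm_num at hdet
  have hεeq : ε₁ * ε₂ = 1 := by
    have h4 : A 0 1 * (ε₁ * ε₂ - 1) = 0 := by
      linear_combination -ε₂ * K01 - M01
    rcases mul_eq_zero.mp h4 with h | h
    · exact absurd h ha01
    · linarith
  have hε : ε₁ = ε₂ := by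
    rcases hε₁ with rfl | rfl <;> rcases hε₂ with rfl | rfl <;> linarith
  refine ⟨hε, A 1 0, ha10, ?_, ?_⟩
  · have h01 : A 0 1 = -(A 1 0)⁻¹ := by
      field_simp
      linarith [hdet]
    ext i j
    fin_cases i <;> fin_cases j <;>
      simp [ha00, ha11, h01]
  · ext i j
    fin_cases i <;> fin_cases j <;>
      simp [Matrix.smul_apply, ha00, ha11, hb00, hb11, K01, K10]
end

section
/- Let μ₀, μ₁, μ₂ > 1 be real numbers, and for each k = 0, 1, 2 let aₖ, bₖ be real numbers with -bₖ > aₖ > 0 and bₖ² - aₖ² = 1, and set Ãₖ := (aₖ, bₖ; -bₖ, -aₖ) ∈ SL(2,ℝ). If the product D(μ₂⁻¹)·Ã₂·D(μ₁⁻¹)·Ã₁·D(μ₀⁻¹)·Ã₀ equals I or -I, then it equals I. -/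
open Matrix

/-- For `μ₀, μ₁, μ₂ > 1` and `Ãₖ = (aₖ, bₖ; -bₖ, -aₖ)` with `-bₖ > aₖ > 0` and
`bₖ² - aₖ² = 1`: if `D(μ₂⁻¹)·Ã₂·D(μ₁⁻¹)·Ã₁·D(μ₀⁻¹)·Ã₀ = ±I`, then it equals `I`. -/
theorem stmt16 (μ₀ μ₁ μ₂ : ℝ) (hμ₀ : 1 < μ₀) (hμ₁ : 1 < μ₁) (hμ₂ : 1 < μ₂)
    (a₀ b₀ a₁ b₁ a₂ b₂ : ℝ)
    (h₀ : a₀ < -b₀) (h₀' : 0 < a₀) (hd₀ : b₀ ^ 2 - a₀ ^ 2 = 1)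
    (h₁ : a₁ < -b₁) (h₁' : 0 < a₁) (hd₁ : b₁ ^ 2 - a₁ ^ 2 = 1)
    (h₂ : a₂ < -b₂) (h₂' : 0 < a₂) (hd₂ : b₂ ^ 2 - a₂ ^ 2 = 1)
    (A₀ A₁ A₂ : Matrix (Fin 2) (Fin 2) ℝ)
    (hA₀ : A₀ = !![a₀, b₀; -b₀, -a₀]) (hA₁ : A₁ = !![a₁, b₁; -b₁, -a₁])
    (hA₂ : A₂ = !![a₂, b₂; -b₂, -a₂])
    (h : D μ₂⁻¹ * A₂ * D μ₁⁻¹ * A₁ * D μ₀⁻¹ * A₀ = 1 ∨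
         D μ₂⁻¹ * A₂ * D μ₁⁻¹ * A₁ * D μ₀⁻¹ * A₀ = -1) :
    D μ₂⁻¹ * A₂ * D μ₁⁻¹ * A₁ * D μ₀⁻¹ * A₀ = 1 := by
  rcases h with h | h
  · exact h
  exfalso
  have hμ₂0 : μ₂ ≠ 0 := by positivity
  have hDD : D μ₂ * D μ₂⁻¹ = 1 := by
    simp [D, Matrix.mul_fin_two, Matrix.one_fin_two, hμ₂0, mul_inv_cancel₀]
  have hAA : A₂ * A₂ = (-1 : Matrix (Fin 2) (Fin 2) ℝ) := by
    rw [hA₂]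
    ext i j
    fin_cases i <;> fin_cases j <;>
      simp [Matrix.mul_fin_two, Matrix.one_fin_two] <;> nlinarith [hd₂]
  have h' : A₂ * D μ₂ * (D μ₂⁻¹ * A₂ * D μ₁⁻¹ * A₁ * D μ₀⁻¹ * A₀) = A₂ * D μ₂ * (-1) :=
    congrArg _ h
  rw [mul_neg_one] at h'
  simp only [← mul_assoc] at h'
  rw [mul_assoc A₂ (D μ₂) (D μ₂⁻¹), hDD, mul_one] at h'
  simp only [mul_assoc] at h'
  rw [← mul_assoc A₂ A₂, hAA] at h'
  simp only [neg_one_mul, neg_inj, ← mul_assoc] at h'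
  -- h' : D μ₁⁻¹ * A₁ * D μ₀⁻¹ * A₀ = A₂ * D μ₂
  have hent := congrFun (congrFun h' 0) 0
  rw [hA₀, hA₁, hA₂] at hent
  simp [D, Matrix.mul_fin_two] at hent
  clear h h' hDD hAA hA₀ hA₁ hA₂ A₀ A₁ A₂
  have hb₀ : b₀ < -a₀ := by linarith
  have hb₁ : b₁ < -a₁ := by linarith
  have hμ₀0 : (0:ℝ) < μ₀ := by linarith
  have hμ₁0 : (0:ℝ) < μ₁ := by linarith
  have hi₀ : (0:ℝ) < μ₀⁻¹ := by positivity
  have hi₁ : (0:ℝ) < μ₁⁻¹ := by positivity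
  have hinv : μ₀⁻¹ < μ₀ := by
    have : μ₀⁻¹ < 1 := by rw [inv_lt_one_iff₀]; right; exact hμ₀
    linarith
  have hnb₀ : (0:ℝ) < -b₀ := by linarith
  have hab : a₁ * a₀ < b₁ * b₀ := by
    have t1 : a₁ * a₀ < a₁ * (-b₀) := mul_lt_mul_of_pos_left h₀ h₁'
    have t2 : a₁ * (-b₀) < (-b₁) * (-b₀) := mul_lt_mul_of_pos_right h₁ hnb₀
    have t3 : (-b₁) * (-b₀) = b₁ * b₀ := by ring
    linarith
  have hab0 : (0:ℝ) < a₁ * a₀ := mul_pos h₁' h₀'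
  have hkey : μ₁⁻¹ * a₁ * μ₀⁻¹ * a₀ < μ₁⁻¹ * b₁ * μ₀ * b₀ := by
    have h1 : a₁ * a₀ * μ₀⁻¹ < b₁ * b₀ * μ₀ := by
      calc a₁ * a₀ * μ₀⁻¹ < b₁ * b₀ * μ₀⁻¹ := mul_lt_mul_of_pos_right hab hi₀
        _ < b₁ * b₀ * μ₀ := mul_lt_mul_of_pos_left hinv (by linarith)
    calc μ₁⁻¹ * a₁ * μ₀⁻¹ * a₀ = μ₁⁻¹ * (a₁ * a₀ * μ₀⁻¹) := by ring
      _ < μ₁⁻¹ * (b₁ * b₀ * μ₀) := by exact (mul_lt_mul_iff_right₀ hi₁).2 h1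
      _ = μ₁⁻¹ * b₁ * μ₀ * b₀ := by ring
  have hpos : (0:ℝ) < a₂ * μ₂ := by positivity
  linarith
end

section
/- Let μ₀, μ₁, μ₂ > 1 be real numbers, and for each k = 0, 1, 2 let aₖ, bₖ be real numbers with -bₖ > aₖ > 0 and bₖ² - aₖ² = 1, and set Ãₖ := (aₖ, bₖ; -bₖ, -aₖ) ∈ SL(2,ℝ). If the product D(μ₂)·Ã₂·D(μ₁)·Ã₁·D(μ₀)·Ã₀ equals I or -I, then it equals -I. -/
open Matrix

private lemma pos_left_of_mul_pos {x c : ℝ} (h : 0 < x * c) (hc : 0 < c) : 0 < x := by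
  by_contra hx
  push_neg at hx
  nlinarith

/-- For `μ₀, μ₁, μ₂ > 1` and `Ãₖ = (aₖ, bₖ; -bₖ, -aₖ)` with `-bₖ > aₖ > 0` and
`bₖ² - aₖ² = 1`: if `D(μ₂)·Ã₂·D(μ₁)·Ã₁·D(μ₀)·Ã₀ = ±I`, then it equals `-I`. -/
theorem stmt17 (μ₀ μ₁ μ₂ : ℝ) (hμ₀ : 1 < μ₀) (hμ₁ : 1 < μ₁) (hμ₂ : 1 < μ₂)
    (a₀ b₀ a₁ b₁ a₂ b₂ : ℝ)
    (h₀ : a₀ < -b₀) (h₀' : 0 < a₀) (hd₀ : b₀ ^ 2 - a₀ ^ 2 = 1)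
    (h₁ : a₁ < -b₁) (h₁' : 0 < a₁) (hd₁ : b₁ ^ 2 - a₁ ^ 2 = 1)
    (h₂ : a₂ < -b₂) (h₂' : 0 < a₂) (hd₂ : b₂ ^ 2 - a₂ ^ 2 = 1)
    (A₀ A₁ A₂ : Matrix (Fin 2) (Fin 2) ℝ)
    (hA₀ : A₀ = !![a₀, b₀; -b₀, -a₀]) (hA₁ : A₁ = !![a₁, b₁; -b₁, -a₁])
    (hA₂ : A₂ = !![a₂, b₂; -b₂, -a₂])
    (h : D μ₂ * A₂ * D μ₁ * A₁ * D μ₀ * A₀ = 1 ∨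
         D μ₂ * A₂ * D μ₁ * A₁ * D μ₀ * A₀ = -1) :
    D μ₂ * A₂ * D μ₁ * A₁ * D μ₀ * A₀ = -1 := by
  rcases h with h1 | h1
  · exfalso
    subst hA₀ hA₁ hA₂
    have n0 : μ₀ ≠ 0 := by positivity
    have n1 : μ₁ ≠ 0 := by positivity
    have n2 : μ₂ ≠ 0 := by positivity
    simp only [D, Matrix.mul_fin_two, Matrix.one_fin_two] at h1
    rw [← Matrix.ext_iff] at h1
    have e00 := h1 0 0
    have e01 := h1 0 1
    have e10 := h1 1 0
    have e11 := h1 1 1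
    simp [Fin.isValue] at e00 e01 e10 e11
    field_simp at e00 e01 e10 e11
    have hb0 : 0 < -b₀ := lt_trans h₀' h₀
    have hb1 : 0 < -b₁ := lt_trans h₁' h₁
    have hb2 : 0 < -b₂ := lt_trans h₂' h₂
    have k1 : (a₁ * (-b₀) - a₀ * (-b₁) * μ₀ ^ 2) * (μ₁ * μ₂ ^ 3)
        = (-b₂) * (μ₀ * μ₁ ^ 2 * μ₂ ^ 2) := by
      linear_combination (-b₂ * μ₁ * μ₂ ^ 2) * e00 + (-a₂ * μ₁ * μ₂ ^ 3) * e10 +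
        (-(μ₁ * μ₂ ^ 3 * (a₁ * (-b₀) - a₀ * (-b₁) * μ₀ ^ 2))) * hd₂
    have k2 : (a₀ * (-b₁) - a₁ * (-b₀) * μ₀ ^ 2) * (μ₁ ^ 2 * (μ₂ ^ 3 * μ₁))
        = (-b₂) * (μ₂ ^ 4 * μ₁ ^ 2 * μ₀) := by
      linear_combination (-b₂ * μ₂ ^ 3 * μ₁) * e11 + (-a₂ * μ₁ * μ₂ ^ 2) * e01 +
        (-(μ₁ ^ 2 * (a₀ * (-b₁) - a₁ * (-b₀) * μ₀ ^ 2) * μ₂ ^ 3 * μ₁)) * hd₂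
    have hμ0p : (0:ℝ) < μ₀ := lt_trans one_pos hμ₀
    have hμ1p : (0:ℝ) < μ₁ := lt_trans one_pos hμ₁
    have hμ2p : (0:ℝ) < μ₂ := lt_trans one_pos hμ₂
    have g1 : 0 < a₁ * (-b₀) - a₀ * (-b₁) * μ₀ ^ 2 := by
      have hr : 0 < (-b₂) * (μ₀ * μ₁ ^ 2 * μ₂ ^ 2) := by positivity
      have hm : 0 < μ₁ * μ₂ ^ 3 := by positivity
      exact pos_left_of_mul_pos (k1 ▸ hr) hm
    have g2 : 0 < a₀ * (-b₁) - a₁ * (-b₀) * μ₀ ^ 2 := by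
      have hr : 0 < (-b₂) * (μ₂ ^ 4 * μ₁ ^ 2 * μ₀) := by positivity
      have hm : 0 < μ₁ ^ 2 * (μ₂ ^ 3 * μ₁) := by positivity
      exact pos_left_of_mul_pos (k2 ▸ hr) hm
    clear e00 e01 e10 e11 h1 k1 k2
    have hX : 1 < μ₀ ^ 2 := by nlinarith
    nlinarith [mul_pos h₁' hb0, mul_pos h₀' hb1]
  · exact h1
end
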